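/- Assume β ∈ [0,1] and M > 6. There exists a constant C > 0 (depending only on β and M) such that for all ω₁ > 1 one has C₂₁²³⁴[n⁰¹, n⁰¹, n⁰¹](ω₁) ≤ C · ω₁^{2β − 1/2 − M/2}. -/
import Mathlib


open MeasureTheory Real

noncomputable section

/-- Japanese bracket ⟨ω⟩ = (1 + ω²)^{1/2}. -/
def jb (ω : ℝ) : ℝ := Real.sqrt (1 + ω ^ 2)

/-- n⁰¹(ω) = ⟨ω⟩^{-M/2}. -/
def n01 (M : ℝ) (ω : ℝ) : ℝ := jb ω ^ (-(M / 2))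

/-- The operator C₂₁²³⁴, with ω₂ = ω₃ + ω₄ − ω₁. -/
def C21op (β : ℝ) (k l m : ℝ → ℝ) (ω₁ : ℝ) : ℝ :=
  64 * π ^ 3 * ω₁ ^ (β - 1/2) *
    ∫ ω₃ in (0:ℝ)..(ω₁ / 2), ∫ ω₄ in (ω₁ - ω₃)..ω₁,
      (ω₃ + ω₄ - ω₁) ^ (β + 1/2) * ω₃ ^ β * ω₄ ^ β *
        (k (ω₃ + ω₄ - ω₁) * l ω₃ * m ω₄)

/-- The operator C₂₂²³⁴, with ω₂ = ω₃ + ω₄ − ω₁. -/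
def C22op (β : ℝ) (k l m : ℝ → ℝ) (ω₁ : ℝ) : ℝ :=
  64 * π ^ 3 * ω₁ ^ (β - 1/2) *
    ∫ ω₃ in (ω₁ / 2)..ω₁, ∫ ω₄ in ω₃..ω₁,
      (ω₃ + ω₄ - ω₁) ^ (β + 1/2) * ω₃ ^ β * ω₄ ^ β *
        (k (ω₃ + ω₄ - ω₁) * l ω₃ * m ω₄)

/-- The operator C₃²³⁴, with ω₂ = ω₃ + ω₄ − ω₁. -/
def C3op (β : ℝ) (k l m : ℝ → ℝ) (ω₁ : ℝ) : ℝ :=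
  64 * π ^ 3 * ω₁ ^ (β - 1/2) *
    ∫ ω₃ in (0:ℝ)..ω₁, ∫ ω₄ in Set.Ioi ω₁,
      (ω₃ + ω₄ - ω₁) ^ β * ω₃ ^ (β + 1/2) * ω₄ ^ β *
        (k (ω₃ + ω₄ - ω₁) * l ω₃ * m ω₄)

/-- The operator C₁²³⁴, with ω₂ = ω₃ + ω₄ − ω₁. -/
def C1op (β : ℝ) (k l m : ℝ → ℝ) (ω₁ : ℝ) : ℝ :=
  64 * π ^ 3 * ω₁ ^ β *
    ∫ ω₃ in Set.Ioi ω₁, ∫ ω₄ in Set.Ioi ω₃,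
      (ω₃ + ω₄ - ω₁) ^ β * ω₃ ^ β * ω₄ ^ β *
        (k (ω₃ + ω₄ - ω₁) * l ω₃ * m ω₄)

/-- The full domain of integration {0 ≤ ω₃ ≤ ω₄, ω₃ + ω₄ ≥ ω₁} ⊂ ℝ². -/
def Dom (ω₁ : ℝ) : Set (ℝ × ℝ) := {p | 0 ≤ p.1 ∧ p.1 ≤ p.2 ∧ ω₁ ≤ p.1 + p.2}

/-- The cross-section factor min{√ω₁, √ω₂, √ω₃}, with ω₂ = ω₃ + ω₄ − ω₁,
where p = (ω₃, ω₄). -/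
def crossMin (ω₁ : ℝ) (p : ℝ × ℝ) : ℝ :=
  min (Real.sqrt ω₁) (min (Real.sqrt (p.1 + p.2 - ω₁)) (Real.sqrt p.1))

/-- The operator C^{j₁j₂j₃}[k,l,m](ω₁) where the factor is k(ω_{j₁}) l(ω_{j₂}) m(ω_{j₃}),
with ω₂ = ω₃ + ω₄ − ω₁ and p = (ω₃, ω₄); here the selection of frequencies is passed
as a function `sel : (ℝ × ℝ) → ℝ × ℝ × ℝ` giving (ω_{j₁}, ω_{j₂}, ω_{j₃}). -/
def Cfull (β : ℝ) (k l m : ℝ → ℝ) (sel : ℝ → ℝ × ℝ → ℝ × ℝ × ℝ) (ω₁ : ℝ) : ℝ :=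
  64 * π ^ 3 * ω₁ ^ (β - 1/2) *
    ∫ p in Dom ω₁,
      ((p.1 + p.2 - ω₁) * p.1 * p.2) ^ β * crossMin ω₁ p *
        (k (sel ω₁ p).1 * l (sel ω₁ p).2.1 * m (sel ω₁ p).2.2)

/-- C²³⁴[k,l,m](ω₁): integrand k(ω₂) l(ω₃) m(ω₄). -/
def C234 (β : ℝ) (k l m : ℝ → ℝ) : ℝ → ℝ :=
  Cfull β k l m (fun ω₁ p => (p.1 + p.2 - ω₁, p.1, p.2))

/-- C¹²⁴[k,l,m](ω₁): integrand k(ω₁) l(ω₂) m(ω₄). -/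
def C124 (β : ℝ) (k l m : ℝ → ℝ) : ℝ → ℝ :=
  Cfull β k l m (fun ω₁ p => (ω₁, p.1 + p.2 - ω₁, p.2))

/-- C¹³⁴[k,l,m](ω₁): integrand k(ω₁) l(ω₃) m(ω₄). -/
def C134 (β : ℝ) (k l m : ℝ → ℝ) : ℝ → ℝ :=
  Cfull β k l m (fun ω₁ p => (ω₁, p.1, p.2))

/-- C¹²³[k,l,m](ω₁): integrand k(ω₁) l(ω₂) m(ω₃). -/
def C123 (β : ℝ) (k l m : ℝ → ℝ) : ℝ → ℝ :=
  Cfull β k l m (fun ω₁ p => (ω₁, p.1 + p.2 - ω₁, p.1))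

lemma integral_shift_decay (a b : ℝ) (hab : a ≤ b) :
    (∫ u in a..b, (1 + (u - a)) ^ (-(3:ℝ)/2)) ≤ 2 := by
  have h1 : (fun u : ℝ => (1 + (u - a)) ^ (-(3:ℝ)/2)) = fun u => (u - (a - 1)) ^ (-(3:ℝ)/2) := by
    funext u; ring_nf
  rw [h1, intervalIntegral.integral_comp_sub_right (fun x => x ^ (-(3:ℝ)/2)) (a-1)]
  have e1 : a - (a - 1) = 1 := by ring
  have e2 : (1:ℝ) ≤ b - (a - 1) := by linarith
  rw [e1, integral_rpow (Or.inr ⟨by norm_num, by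
    rw [Set.uIcc_of_le e2]; intro h; have := (Set.mem_Icc.1 h).1; linarith⟩)]
  have h3 : (0:ℝ) ≤ (b - (a-1)) ^ (-(3:ℝ)/2 + 1) := Real.rpow_nonneg (by linarith) _
  rw [Real.one_rpow]
  have h4 : ((b - (a-1)) ^ (-(3:ℝ)/2 + 1) - 1) / (-(3:ℝ)/2 + 1) =
      2 - 2 * (b - (a-1)) ^ (-(3:ℝ)/2 + 1) := by ring
  rw [h4]; linarith



lemma key (a b c : ℝ) (hab : a ≤ b) (hc : 0 ≤ c) (φ : ℝ → ℝ)
    (h0 : ∀ u ∈ Set.Ioc a b, 0 ≤ φ u)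
    (hφ : ∀ u ∈ Set.Ioc a b, φ u ≤ c * (1 + (u - a)) ^ (-(3:ℝ)/2)) :
    (∫ u in a..b, φ u) ≤ 2 * c := by
  have hcont : ContinuousOn (fun u : ℝ => c * (1 + (u - a)) ^ (-(3:ℝ)/2)) (Set.Icc a b) := by
    apply ContinuousOn.mul continuousOn_const
    apply ContinuousOn.rpow_const
    · exact (continuousOn_const.add (continuousOn_id.sub continuousOn_const))
    · intro x hx; left; have := hx.1; nlinarith
  have hint : IntegrableOn (fun u : ℝ => c * (1 + (u - a)) ^ (-(3:ℝ)/2)) (Set.Ioc a b) :=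
    (hcont.integrableOn_Icc).mono_set Set.Ioc_subset_Icc_self
  rw [intervalIntegral.integral_of_le hab]
  have h1 : (∫ u in Set.Ioc a b, φ u) ≤ ∫ u in Set.Ioc a b, c * (1 + (u - a)) ^ (-(3:ℝ)/2) := by
    apply integral_mono_of_nonneg
    · exact (ae_restrict_mem measurableSet_Ioc).mono h0
    · exact hint
    · exact (ae_restrict_mem measurableSet_Ioc).mono hφ
  refine h1.trans ?_
  rw [← intervalIntegral.integral_of_le hab, intervalIntegral.integral_const_mul]
  calc c * ∫ u in a..b, (1 + (u - a)) ^ (-(3:ℝ)/2)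
      ≤ c * 2 := mul_le_mul_of_nonneg_left (integral_shift_decay a b hab) hc
    _ = 2 * c := mul_comm _ _

lemma n01_nonneg (M ω : ℝ) : 0 ≤ n01 M ω := Real.rpow_nonneg (Real.sqrt_nonneg _) _

lemma n01_eq (M ω : ℝ) : n01 M ω = (1 + ω ^ 2) ^ (-(M/4)) := by
  unfold n01 jb
  rw [Real.sqrt_eq_rpow, ← Real.rpow_mul (by positivity)]
  congr 1; ring

lemma n01_decay (M : ℝ) (hM : 6 < M) (u : ℝ) (hu : 0 ≤ u) (e : ℝ) (he0 : 0 ≤ e)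
    (he1 : e ≤ 3/2) :
    u ^ e * n01 M u ≤ (2:ℝ) ^ (M/4) * (1 + u) ^ (-(3:ℝ)/2) := by
  have h1u : (1:ℝ) ≤ 1 + u := by linarith
  have h1 : u ^ e ≤ (1 + u) ^ ((3:ℝ)/2) :=
    (Real.rpow_le_rpow hu (by linarith) he0).trans
      (Real.rpow_le_rpow_of_exponent_le h1u he1)
  have h2 : n01 M u ≤ (2:ℝ) ^ (M/4) * (1 + u) ^ (-(M/2)) := by
    rw [n01_eq]
    have hb : ((1+u)^2) / 2 ≤ 1 + u ^ 2 := by nlinarith [sq_nonneg (1-u)]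
    have h3 : (1 + u^2) ^ (-(M/4)) ≤ (((1+u)^2)/2) ^ (-(M/4)) :=
      Real.rpow_le_rpow_of_nonpos (by positivity) hb (by linarith)
    refine h3.trans_eq ?_
    rw [Real.div_rpow (by positivity) (by norm_num), ← Real.rpow_natCast (1+u) 2,
      ← Real.rpow_mul (by linarith), div_eq_mul_inv]
    have hi : (((2:ℝ) ^ (-(M/4)))⁻¹ : ℝ) = (2:ℝ) ^ (M/4) := by
      rw [← Real.rpow_neg (by norm_num)]; norm_num
    have hexp : ((2:ℕ):ℝ) * -(M/4) = -(M/2) := by push_cast; ring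
    rw [hi, hexp, mul_comm]
  calc u ^ e * n01 M u ≤ (1 + u) ^ ((3:ℝ)/2) * ((2:ℝ) ^ (M/4) * (1 + u) ^ (-(M/2))) :=
        mul_le_mul h1 h2 (n01_nonneg _ _) (Real.rpow_nonneg (by linarith) _)
    _ = (2:ℝ) ^ (M/4) * (1 + u) ^ ((3:ℝ)/2 + -(M/2)) := by
        rw [Real.rpow_add (by linarith : (0:ℝ) < 1 + u)]; ring
    _ ≤ (2:ℝ) ^ (M/4) * (1 + u) ^ (-(3:ℝ)/2) := by
        apply mul_le_mul_of_nonneg_left (Real.rpow_le_rpow_of_exponent_le h1u (by linarith))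
        positivity

lemma bound4 (β M ω₁ ω₄ : ℝ) (hβ0 : 0 ≤ β) (hM : 0 < M) (hω₁ : 1 < ω₁)
    (h4l : ω₁/2 ≤ ω₄) (h4u : ω₄ ≤ ω₁) :
    ω₄ ^ β * n01 M ω₄ ≤ (2:ℝ)^(M/2) * ω₁^(β - M/2) := by
  have h40 : 0 < ω₄ := by linarith
  have h1 : ω₄ ^ β ≤ ω₁ ^ β := Real.rpow_le_rpow h40.le h4u hβ0
  have hjb : ω₄ ≤ jb ω₄ := by
    unfold jb
    nlinarith [Real.sq_sqrt (by positivity : (0:ℝ) ≤ 1 + ω₄^2), Real.sqrt_nonneg (1 + ω₄^2)]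
  have h2 : n01 M ω₄ ≤ ω₄ ^ (-(M/2)) :=
    Real.rpow_le_rpow_of_nonpos h40 hjb (by linarith)
  have h3 : ω₄ ^ (-(M/2)) ≤ (ω₁/2) ^ (-(M/2)) :=
    Real.rpow_le_rpow_of_nonpos (by linarith) h4l (by linarith)
  have h4 : (ω₁/2 : ℝ) ^ (-(M/2)) = (2:ℝ)^(M/2) * ω₁^(-(M/2)) := by
    rw [Real.div_rpow (by linarith) (by norm_num), div_eq_mul_inv,
      ← Real.rpow_neg (by norm_num : (0:ℝ) ≤ 2)]
    ring_nf
  calc ω₄ ^ β * n01 M ω₄ ≤ ω₁ ^ β * ((2:ℝ)^(M/2) * ω₁^(-(M/2))) := by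
        apply mul_le_mul h1 ((h2.trans h3).trans_eq h4) (n01_nonneg _ _)
          (Real.rpow_nonneg (by linarith) _)
    _ = (2:ℝ)^(M/2) * ω₁^(β - M/2) := by
        rw [show β - M/2 = β + -(M/2) by ring, Real.rpow_add (by linarith)]; ring


/-- Upper bound: C₂₁²³⁴[n⁰¹,n⁰¹,n⁰¹](ω₁) ≲ ω₁^{2β − 1/2 − M/2} for ω₁ > 1. -/
theorem C21_upper_bound (β M : ℝ) (hβ0 : 0 ≤ β) (hβ1 : β ≤ 1) (hM : 6 < M) :
    ∃ C : ℝ, 0 < C ∧ ∀ ω₁ : ℝ, 1 < ω₁ →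
      C21op β (n01 M) (n01 M) (n01 M) ω₁ ≤ C * ω₁ ^ (2 * β - 1/2 - M / 2) := by
  unfold C21op
  refine ⟨64 * π ^ 3 * 2 ^ (M + 2), by positivity, fun ω₁ hω₁ => ?_⟩
  have hω₁0 : (0:ℝ) < ω₁ := by linarith
  set K : ℝ := (2:ℝ)^(M/2) * ω₁^(β - M/2) with hK
  have hK0 : 0 ≤ K := by positivity
  -- inner bound
  have hinner : ∀ ω₃ ∈ Set.Ioc (0:ℝ) (ω₁/2),
      (∫ ω₄ in (ω₁ - ω₃)..ω₁,
        (ω₃ + ω₄ - ω₁) ^ (β + 1/2) * ω₃ ^ β * ω₄ ^ β *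
          (n01 M (ω₃ + ω₄ - ω₁) * n01 M ω₃ * n01 M ω₄))
      ≤ ((2:ℝ)^(M/2+1) * K) * (1 + (ω₃ - 0)) ^ (-(3:ℝ)/2) := by
    intro ω₃ h3
    obtain ⟨h30, h3u⟩ := h3
    have hab : ω₁ - ω₃ ≤ ω₁ := by linarith
    have hstep : (∫ ω₄ in (ω₁ - ω₃)..ω₁,
        (ω₃ + ω₄ - ω₁) ^ (β + 1/2) * ω₃ ^ β * ω₄ ^ β *
          (n01 M (ω₃ + ω₄ - ω₁) * n01 M ω₃ * n01 M ω₄))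
        ≤ 2 * ((2:ℝ)^(M/4) * (ω₃ ^ β * n01 M ω₃) * K) := by
      apply key _ _ _ hab (mul_nonneg (mul_nonneg (by positivity) (mul_nonneg (Real.rpow_nonneg h30.le _) (n01_nonneg _ _))) hK0) _ ?h0 ?hb
      case h0 =>
        intro ω₄ h4
        have h2 : 0 ≤ ω₃ + ω₄ - ω₁ := by have := h4.1; linarith
        have h4p : (0:ℝ) ≤ ω₄ := by have := h4.1; linarith
        have := n01_nonneg M (ω₃ + ω₄ - ω₁); have := n01_nonneg M ω₃; have := n01_nonneg M ω₄
        positivity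
      case hb =>
        intro ω₄ h4
        obtain ⟨h4l, h4u⟩ := h4
        have h2 : 0 ≤ ω₃ + ω₄ - ω₁ := by linarith
        have heq : (ω₃ + ω₄ - ω₁) ^ (β + 1/2) * ω₃ ^ β * ω₄ ^ β *
            (n01 M (ω₃ + ω₄ - ω₁) * n01 M ω₃ * n01 M ω₄)
            = ((ω₃ + ω₄ - ω₁) ^ (β + 1/2) * n01 M (ω₃ + ω₄ - ω₁)) *
              ((ω₃ ^ β * n01 M ω₃) * (ω₄ ^ β * n01 M ω₄)) := by ring
        have hA : (ω₃ + ω₄ - ω₁) ^ (β + 1/2) * n01 M (ω₃ + ω₄ - ω₁)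
            ≤ (2:ℝ)^(M/4) * (1 + (ω₃ + ω₄ - ω₁)) ^ (-(3:ℝ)/2) :=
          n01_decay M hM _ h2 _ (by linarith) (by linarith)
        have hC : ω₄ ^ β * n01 M ω₄ ≤ K :=
          bound4 β M ω₁ ω₄ hβ0 (by linarith) hω₁ (by linarith) h4u
        have hBnn : 0 ≤ ω₃ ^ β * n01 M ω₃ :=
          mul_nonneg (Real.rpow_nonneg h30.le _) (n01_nonneg _ _)
        have h4nn : 0 ≤ ω₄ ^ β * n01 M ω₄ :=
          mul_nonneg (Real.rpow_nonneg (by linarith) _) (n01_nonneg _ _)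
        have hAnn : 0 ≤ (ω₃ + ω₄ - ω₁) ^ (β + 1/2) * n01 M (ω₃ + ω₄ - ω₁) :=
          mul_nonneg (Real.rpow_nonneg h2 _) (n01_nonneg _ _)
        rw [heq]
        calc ((ω₃ + ω₄ - ω₁) ^ (β + 1/2) * n01 M (ω₃ + ω₄ - ω₁)) *
              ((ω₃ ^ β * n01 M ω₃) * (ω₄ ^ β * n01 M ω₄))
            ≤ ((2:ℝ)^(M/4) * (1 + (ω₃ + ω₄ - ω₁)) ^ (-(3:ℝ)/2)) *
              ((ω₃ ^ β * n01 M ω₃) * K) :=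
              mul_le_mul hA (mul_le_mul_of_nonneg_left hC hBnn) (mul_nonneg hBnn h4nn)
                (by positivity)
          _ = ((2:ℝ)^(M/4) * (ω₃ ^ β * n01 M ω₃) * K) *
              (1 + (ω₄ - (ω₁ - ω₃))) ^ (-(3:ℝ)/2) := by
              rw [show ω₄ - (ω₁ - ω₃) = ω₃ + ω₄ - ω₁ by ring]; ring
    refine hstep.trans ?_
    have hh : ω₃ ^ β * n01 M ω₃ ≤ (2:ℝ)^(M/4) * (1 + ω₃) ^ (-(3:ℝ)/2) :=
      n01_decay M hM _ h30.le _ hβ0 (by linarith)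
    have hfin : 2 * ((2:ℝ)^(M/4) * (ω₃ ^ β * n01 M ω₃) * K)
        ≤ 2 * ((2:ℝ)^(M/4) * ((2:ℝ)^(M/4) * (1 + ω₃) ^ (-(3:ℝ)/2)) * K) := by
      have := mul_le_mul_of_nonneg_left hh (by positivity : (0:ℝ) ≤ (2:ℝ)^(M/4))
      nlinarith [hK0]
    refine hfin.trans_eq ?_
    have h2 : (2:ℝ)^(M/4) * (2:ℝ)^(M/4) = (2:ℝ)^(M/2) := by
      rw [← Real.rpow_add (by norm_num : (0:ℝ) < 2)]; congr 1; ring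
    have h3 : (2:ℝ)^(M/2+1) = (2:ℝ)^(M/2) * 2 := by
      rw [Real.rpow_add (by norm_num : (0:ℝ) < 2), Real.rpow_one]
    rw [sub_zero, h3, ← h2]; ring
  -- outer
  have houter : (∫ ω₃ in (0:ℝ)..(ω₁/2), ∫ ω₄ in (ω₁ - ω₃)..ω₁,
        (ω₃ + ω₄ - ω₁) ^ (β + 1/2) * ω₃ ^ β * ω₄ ^ β *
          (n01 M (ω₃ + ω₄ - ω₁) * n01 M ω₃ * n01 M ω₄))
      ≤ 2 * ((2:ℝ)^(M/2+1) * K) := by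
    apply key _ _ _ (by linarith) (by positivity) _ ?_ hinner
    intro ω₃ h3
    have h30' : (0:ℝ) < ω₃ := h3.1
    apply intervalIntegral.integral_nonneg (by linarith)
    intro ω₄ h4
    have h2 : 0 ≤ ω₃ + ω₄ - ω₁ := by have := h4.1; linarith
    have h4p : (0:ℝ) ≤ ω₄ := by have := h4.1; have := h3.2; linarith
    have := n01_nonneg M (ω₃ + ω₄ - ω₁); have := n01_nonneg M ω₃; have := n01_nonneg M ω₄
    have h30 : (0:ℝ) ≤ ω₃ := h3.1.le
    positivity
  have hpre : (0:ℝ) ≤ 64 * π ^ 3 * ω₁ ^ (β - 1/2) := by positivity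
  calc 64 * π ^ 3 * ω₁ ^ (β - 1/2) * _ ≤ 64 * π ^ 3 * ω₁ ^ (β - 1/2) *
        (2 * ((2:ℝ)^(M/2+1) * K)) := mul_le_mul_of_nonneg_left houter hpre
    _ = 64 * π ^ 3 * 2 ^ (M + 2) * ω₁ ^ (2 * β - 1/2 - M / 2) := by
        rw [hK]
        have e1 : (2:ℝ) * ((2:ℝ)^(M/2+1) * ((2:ℝ)^(M/2) * ω₁^(β - M/2)))
            = (2:ℝ)^(M+2) * ω₁^(β - M/2) := by
          have hsplit : (2:ℝ)^(M+2) = (2:ℝ)^(M/2+1) * (2:ℝ)^(M/2) * 2 := by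
            rw [show (M:ℝ)+2 = (M/2+1) + (M/2) + 1 by ring,
              Real.rpow_add (by norm_num : (0:ℝ) < 2),
              Real.rpow_add (by norm_num : (0:ℝ) < 2), Real.rpow_one]
          rw [hsplit]; ring
        rw [e1, show (2:ℝ) * β - 1/2 - M/2 = (β - 1/2) + (β - M/2) by ring,
          Real.rpow_add hω₁0]
        ring
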